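/- In the symmetric inverse monoid I(X), with E(F;v) = Id restricted to C(F;v) where C(F;v) = ∩_{f∈F} C(f,v), the product of two such idempotents satisfies: E(F;v)·E(G;w) = 0 unless v is a prefix of w or w is a prefix of v; and if w = vz then E(F;v)E(G;w) = E(G ∪ Fz; w), where Fz = {fz : f ∈ F}. -/
import Mathlib


open Function

/-- The one-sided shift map on `ℕ → A`. -/
def shft {A : Type*} (x : ℕ → A) : ℕ → A := fun n => x (n + 1)

/-- Concatenation of a finite word `w` with an infinite word `x`. -/
def wcat {A : Type*} (w : List A) (x : ℕ → A) : ℕ → A :=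
  fun n => w.getD n (x (n - w.length))

/-- Partial bijections on `ℕ → A` modelled as relations (sets of pairs (input, output)). -/
abbrev PB (A : Type*) := Set ((ℕ → A) × (ℕ → A))

/-- Composition on the largest possible domain: `rcomp r s` applies `s` first, then `r`
(i.e. the semigroup product `r · s`). -/
def rcomp {A : Type*} (r s : PB A) : PB A := {p | ∃ y, (p.1, y) ∈ s ∧ (y, p.2) ∈ r}

/-- Inverse of a partial bijection. -/
def rinv {A : Type*} (r : PB A) : PB A := {p | (p.2, p.1) ∈ r}

/-- The identity map on a subset `U`. -/
def idOn {A : Type*} (U : Set (ℕ → A)) : PB A := {p | p.1 ∈ U ∧ p.2 = p.1}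

/-- The partial bijection `s_μ : x ↦ μx` on `{x ∈ X : μx ∈ X}`. -/
def sMap {A : Type*} (X : Set (ℕ → A)) (μ : List A) : PB A :=
  {p | p.1 ∈ X ∧ wcat μ p.1 ∈ X ∧ p.2 = wcat μ p.1}

/-- The cylinder set `C(v) = {vx : x ∈ A^ℕ} ∩ X`. -/
def Cyl {A : Type*} (X : Set (ℕ → A)) (v : List A) : Set (ℕ → A) :=
  {y | y ∈ X ∧ ∃ x, y = wcat v x}

/-- `C(μ,ν) = {νx ∈ X : μx ∈ X}`. -/
def Cmn {A : Type*} (X : Set (ℕ → A)) (μ ν : List A) : Set (ℕ → A) :=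
  {y | ∃ x, y = wcat ν x ∧ y ∈ X ∧ wcat μ x ∈ X}

/-- `C(F;v) = {vx ∈ X : fx ∈ X for all f ∈ F}`. -/
def CFv {A : Type*} (X : Set (ℕ → A)) (F : Finset (List A)) (v : List A) : Set (ℕ → A) :=
  {y | ∃ x, y = wcat v x ∧ y ∈ X ∧ ∀ f ∈ F, wcat f x ∈ X}

/-- The idempotent `E(F;v) = Id_{C(F;v)}`. -/
def Efv {A : Type*} (X : Set (ℕ → A)) (F : Finset (List A)) (v : List A) : PB A :=
  idOn (CFv X F v)

/-- The set `E_X = {E(F;v)} ∪ {0}` of idempotents. -/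
def EXset {A : Type*} (X : Set (ℕ → A)) : Set (PB A) :=
  {r | r = ∅ ∨ ∃ (F : Finset (List A)) (v : List A), r = Efv X F v}

/-- The element `s_α E(F;v) s_β^*` of `I(X)`. -/
def elt {A : Type*} (X : Set (ℕ → A)) (α : List A) (F : Finset (List A)) (v β : List A) :
    PB A :=
  rcomp (rcomp (sMap X α) (Efv X F v)) (rinv (sMap X β))

/-- The inverse semigroup `S_X = {s_α E(F;v) s_β^*} ∪ {0}` (closed form). -/
def SXset {A : Type*} (X : Set (ℕ → A)) : Set (PB A) :=
  {r | r = ∅ ∨ ∃ (α β v : List A) (F : Finset (List A)), r = elt X α F v β}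

/-- `α` and `β` are in lowest terms: they do not both end with the same letter. -/
def LowTerms {A : Type*} (α β : List A) : Prop :=
  ∀ a : A, ¬(α.getLast? = some a ∧ β.getLast? = some a)

/-- A word viewed as an element of the free group on `A`. -/
def wgrp {A : Type*} (w : List A) : FreeGroup A := (w.map FreeGroup.of).prod

/-- Natural partial order on partial bijections: `s ≤ t` iff `t s^* s = s`. -/
def rle {A : Type*} (s t : PB A) : Prop := rcomp t (rcomp (rinv s) s) = s

/-- `P_k(x) = {μ ∈ A^k : μx ∈ X}`. -/
def Pk {A : Type*} (X : Set (ℕ → A)) (k : ℕ) (x : ℕ → A) : Set (List A) :=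
  {μ | μ.length = k ∧ wcat μ x ∈ X}

/-- `l`-past equivalence: `P_r(x) = P_r(y)` for all `r ≤ l`. -/
def pastEq {A : Type*} (X : Set (ℕ → A)) (l : ℕ) (x y : ℕ → A) : Prop :=
  ∀ r ≤ l, Pk X r x = Pk X r y

/-- The relation `x ~_{(k,l)} y`. -/
def klEq {A : Type*} (X : Set (ℕ → A)) (k l : ℕ) (x y : ℕ → A) : Prop :=
  (∀ i < k, x i = y i) ∧ pastEq X l (shft^[k] x) (shft^[k] y)

lemma wcat_append {A : Type*} (v z : List A) (x : ℕ → A) :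
    wcat (v ++ z) x = wcat v (wcat z x) := by
  funext n
  simp only [wcat]
  rcases lt_or_ge n v.length with h | h
  · rw [List.getD_eq_getElem _ _ h, List.getD_eq_getElem _ _ (by simp; omega),
      List.getElem_append_left h]
  · rw [List.getD_eq_default _ _ h, List.getD_append_right _ _ _ _ h]
    simp [List.length_append, Nat.sub_sub, Nat.add_comm]

lemma wcat_inj {A : Type*} (v : List A) {x x' : ℕ → A} (h : wcat v x = wcat v x') :
    x = x' := by
  funext n
  have hc := congrFun h (n + v.length)
  simp only [wcat] at hc
  rw [List.getD_eq_default _ _ (by omega), List.getD_eq_default _ _ (by omega)] at hc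
  simpa using hc

lemma wcat_prefix {A : Type*} {v w : List A} {x x' : ℕ → A}
    (h : wcat v x = wcat w x') (hl : v.length ≤ w.length) : v <+: w := by
  have : v = w.take v.length := by
    apply List.ext_getElem (by simp [hl])
    intro i hi _
    have hc := congrFun h i
    simp only [wcat] at hc
    rw [List.getD_eq_getElem _ _ hi, List.getD_eq_getElem _ _ (by omega)] at hc
    simpa [List.getElem_take] using hc
  rw [this]; exact List.take_prefix _ _

theorem stmt2 {A : Type*} [Fintype A] [DecidableEq A] [TopologicalSpace A] [DiscreteTopology A]
    (X : Set (ℕ → A)) (hXcl : IsClosed X) (hXsh : ∀ x ∈ X, shft x ∈ X) :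
    (∀ (F G : Finset (List A)) (v w : List A), ¬(v <+: w ∨ w <+: v) →
        rcomp (Efv X F v) (Efv X G w) = (∅ : PB A)) ∧
    (∀ (F G : Finset (List A)) (v z : List A),
        rcomp (Efv X F v) (Efv X G (v ++ z)) =
          Efv X (G ∪ F.image (fun f => f ++ z)) (v ++ z)) := by
  constructor
  · intro F G v w hvw
    ext p
    simp only [rcomp, Efv, idOn, CFv, Set.mem_setOf_eq, Set.mem_empty_iff_false, iff_false]
    rintro ⟨y, ⟨⟨x1, hx1, -, -⟩, rfl⟩, ⟨x2, hx2, -, -⟩, -⟩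
    refine hvw ?_
    rcases le_total v.length w.length with h | h
    · exact Or.inl (wcat_prefix (hx2 ▸ hx1) h)
    · exact Or.inr (wcat_prefix (hx1 ▸ hx2) h)
  · intro F G v z
    ext p
    simp only [rcomp, Efv, idOn, Set.mem_setOf_eq]
    constructor
    · rintro ⟨y, ⟨h1, rfl⟩, h2, hp⟩
      refine ⟨?_, hp⟩
      obtain ⟨x, hx, hX, hG⟩ := h1
      obtain ⟨x', hx', -, hF⟩ := h2
      have hxx : x' = wcat z x := wcat_inj v (by rw [← hx', ← wcat_append, ← hx])
      refine ⟨x, hx, hX, ?_⟩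
      intro f hf
      simp only [Finset.mem_union, Finset.mem_image] at hf
      rcases hf with hf | ⟨g, hg, rfl⟩
      · exact hG f hf
      · rw [wcat_append]; rw [hxx] at hF; exact hF g hg
    · rintro ⟨⟨x, hx, hX, hGF⟩, hp⟩
      exact ⟨p.1, ⟨⟨x, hx, hX, fun g hg => hGF g (Finset.mem_union_left _ hg)⟩, rfl⟩,
        ⟨wcat z x, by rw [hx, wcat_append], hX,
          fun f hf => by
            rw [← wcat_append]
            exact hGF (f ++ z) (Finset.mem_union_right _ (Finset.mem_image_of_mem _ hf))⟩, hp⟩
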